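/- For every natural number k ≥ 1, the Stern polynomials satisfy 2·∑_{i=1}^{2^k} (-1)^i·B_i(t) = (t-2)·((t+2)^{k-1} + t^{k-1}) + 2·t^{k-1} as an identity in ℤ[t]. -/

import Mathlib

open Polynomial

/-- The Stern polynomials: `B 0 = 0`, `B 1 = 1`, `B (2n) = t * B n`,
`B (2n+1) = B n + B (n+1)`. -/
noncomputable def stern : ℕ → Polynomial ℤ
  | 0 => 0
  | 1 => 1
  | n + 2 =>
    if _h : n % 2 = 0 then
      X * stern (n / 2 + 1)
    else
      stern (n / 2 + 1) + stern (n / 2 + 2)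
  decreasing_by all_goals omega

lemma stern_zero : stern 0 = 0 := by rw [stern]
lemma stern_one : stern 1 = 1 := by rw [stern]

lemma stern_two_mul (n : ℕ) : stern (2 * n) = X * stern n := by
  match n with
  | 0 => simp [stern_zero]
  | m + 1 =>
    rw [show 2 * (m + 1) = 2 * m + 2 by ring, stern]
    have h1 : (2 * m) % 2 = 0 := by omega
    have h2 : 2 * m / 2 = m := by omega
    simp [h1, h2]

lemma stern_two_mul_add_one (n : ℕ) : stern (2 * n + 1) = stern n + stern (n + 1) := by
  match n with
  | 0 => simp [stern_zero, stern_one]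
  | m + 1 =>
    rw [show 2 * (m + 1) + 1 = (2 * m + 1) + 2 by ring, stern]
    have h1 : (2 * m + 1) % 2 = 1 := by omega
    have h2 : (2 * m + 1) / 2 = m := by omega
    simp [h1, h2]

lemma stern_two_pow (k : ℕ) : stern (2 ^ k) = X ^ k := by
  induction k with
  | zero => simp [stern_one]
  | succ n ih => rw [pow_succ, mul_comm, stern_two_mul, ih, pow_succ, mul_comm]

lemma sum_range_two_mul (f : ℕ → Polynomial ℤ) (n : ℕ) :
    ∑ i ∈ Finset.range (2 * n), f i =
      ∑ j ∈ Finset.range n, (f (2 * j) + f (2 * j + 1)) := by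
  induction n with
  | zero => simp
  | succ m ih =>
    rw [Finset.sum_range_succ, ← ih, show 2 * (m + 1) = (2 * m + 1) + 1 by ring,
      Finset.sum_range_succ, Finset.sum_range_succ]
    ring

lemma stern_shift_sum (m : ℕ) : ∑ j ∈ Finset.range (2 ^ m), stern (j + 1) =
    ∑ i ∈ Finset.range (2 ^ m + 1), stern i := by
  rw [Finset.sum_range_succ' (fun i => stern i) (2 ^ m), stern_zero, add_zero]

lemma stern_sub_sum (m : ℕ) : ∑ j ∈ Finset.range (2 ^ m), stern j =
    (∑ i ∈ Finset.range (2 ^ m + 1), stern i) - X ^ m := by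
  rw [Finset.sum_range_succ, stern_two_pow]; ring

lemma twoT (k : ℕ) :
    2 * ∑ i ∈ Finset.range (2 ^ k + 1), stern i = (X + 2) ^ k + X ^ k := by
  induction k with
  | zero =>
    rw [show (2 : ℕ) ^ 0 + 1 = 2 by norm_num, Finset.sum_range_succ, Finset.sum_range_one,
      stern_zero, stern_one]
    ring
  | succ m ih =>
    have hsplit : ∑ i ∈ Finset.range (2 ^ (m + 1) + 1), stern i =
        (∑ j ∈ Finset.range (2 ^ m), (stern (2 * j) + stern (2 * j + 1))) + stern (2 ^ (m + 1)) := by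
      rw [show 2 ^ (m + 1) + 1 = 2 * 2 ^ m + 1 by ring, Finset.sum_range_succ,
        sum_range_two_mul, show 2 * 2 ^ m = 2 ^ (m + 1) by ring]
    rw [hsplit]
    simp_rw [stern_two_mul, stern_two_mul_add_one]
    rw [Finset.sum_add_distrib, Finset.sum_add_distrib, ← Finset.mul_sum, stern_shift_sum,
      stern_sub_sum, stern_two_pow]
    linear_combination (X + 2) * ih

theorem stern_alt_sum_rows (k : ℕ) (hk : 1 ≤ k) :
    2 * ∑ i ∈ Finset.Icc 1 (2 ^ k), (-1) ^ i * stern i =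
      (X - 2) * ((X + 2) ^ (k - 1) + X ^ (k - 1)) + 2 * X ^ (k - 1) := by
  obtain ⟨m, rfl⟩ : ∃ m, k = m + 1 := ⟨k - 1, by omega⟩
  simp only [Nat.add_sub_cancel]
  have hIcc : ∑ i ∈ Finset.Icc 1 (2 ^ (m + 1)), (-1 : Polynomial ℤ) ^ i * stern i =
      ∑ i ∈ Finset.range (2 ^ (m + 1) + 1), (-1) ^ i * stern i := by
    have hpow : 1 ≤ 2 ^ (m + 1) := Nat.one_le_two_pow
    have : Finset.range (2 ^ (m + 1) + 1) = insert 0 (Finset.Icc 1 (2 ^ (m + 1))) := by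
      ext x; simp; omega
    rw [this, Finset.sum_insert (by simp), stern_zero]
    ring
  rw [hIcc]
  have hsplit : ∑ i ∈ Finset.range (2 ^ (m + 1) + 1), (-1 : Polynomial ℤ) ^ i * stern i =
      (∑ j ∈ Finset.range (2 ^ m),
        ((-1) ^ (2 * j) * stern (2 * j) + (-1) ^ (2 * j + 1) * stern (2 * j + 1)))
        + (-1) ^ (2 ^ (m + 1)) * stern (2 ^ (m + 1)) := by
    rw [show 2 ^ (m + 1) + 1 = 2 * 2 ^ m + 1 by ring, Finset.sum_range_succ,
      sum_range_two_mul, show 2 * 2 ^ m = 2 ^ (m + 1) by ring]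
  have hneg : ∀ j : ℕ, ((-1 : Polynomial ℤ)) ^ (2 * j) = 1 := by
    intro j; rw [pow_mul]; norm_num
  have hnegO : ∀ j : ℕ, ((-1 : Polynomial ℤ)) ^ (2 * j + 1) = -1 := by
    intro j; rw [pow_succ, hneg, one_mul]
  have hnegE : ((-1 : Polynomial ℤ)) ^ (2 ^ (m + 1)) = 1 := by
    rw [show (2 : ℕ) ^ (m + 1) = 2 * 2 ^ m by ring, pow_mul]; norm_num
  rw [hsplit, hnegE, stern_two_pow, one_mul]
  simp_rw [hneg, hnegO, one_mul, neg_one_mul, stern_two_mul, stern_two_mul_add_one,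
    neg_add]
  rw [Finset.sum_add_distrib, Finset.sum_add_distrib, ← Finset.mul_sum,
    Finset.sum_neg_distrib, Finset.sum_neg_distrib, stern_shift_sum, stern_sub_sum]
  linear_combination (X - 2) * twoT m
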